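/- Let R ⊆ S be rings, and suppose the set T of elements of R invertible in S satisfies the right Ore condition in R. Then the canonical map from the Ore localization RT^{-1} to S is injective with image the division closure of R in S; in particular RT^{-1} ≅ D(R ⊆ S). -/
import Mathlib


/-- A subring `T` of `S` is division closed if the inverse (in `S`) of any element of `T`
that is invertible in `S` already lies in `T`. -/
def DivisionClosed {S : Type} [Ring S] (T : Subring S) : Prop :=
  ∀ u : Sˣ, (u : S) ∈ T → ((u⁻¹ : Sˣ) : S) ∈ T

/-- The division closure of `R` in `S`: the smallest division closed subring of `S`
containing `R`. -/
def divisionClosure {S : Type} [Ring S] (R : Subring S) : Subring S :=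
  sInf {T : Subring S | R ≤ T ∧ DivisionClosed T}

/-- If `u * b = c` for a unit `u`, then `b = u⁻¹ * c`. -/
lemma aux_unit_cancel {S : Type} [Monoid S] (u : Sˣ) {b c : S} (h : (u : S) * b = c) :
    b = ((u⁻¹ : Sˣ) : S) * c := by
  rw [← h, ← mul_assoc, u.inv_mul, one_mul]

/-- Let `R ⊆ S` be rings and let `T` be the set of elements of `R` that become invertible
in `S`; suppose `T` satisfies the (right) Ore condition. Then the canonical map from the
Ore localization `RT⁻¹` to `S` is injective with image the division closure of `R` in `S`;
in particular `RT⁻¹ ≅ D(R ⊆ S)`. -/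
theorem oreLocalization_embeds_with_image_divisionClosure (S : Type) [Ring S]
    (R : Subring S) (T : Submonoid R)
    (hT : ∀ x : R, x ∈ T ↔ IsUnit (x : S))
    [OreLocalization.OreSet T]
    (Φ : OreLocalization T R →+* S)
    (hΦ : ∀ r : R, Φ (OreLocalization.numeratorHom r) = (r : S)) :
    Function.Injective Φ ∧ Set.range Φ = (divisionClosure R : Set S) := by
  have hΦ' : ∀ r : R, Φ (r /ₒ (1 : T)) = (r : S) := fun r => by
    rw [← OreLocalization.numeratorHom_apply]; exact hΦ r
  -- t * Φ(1 /ₒ t) = 1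
  have hinv : ∀ t : T, ((t : R) : S) * Φ ((1 : R) /ₒ t) = 1 := by
    intro t
    have h := OreLocalization.mul_inv t (1 : T)
    have h2 := congrArg Φ h
    rw [map_mul, map_one] at h2
    have h3 : Φ ((t : R) /ₒ (1 : T)) = ((t : R) : S) := hΦ' _
    have h4 : ((1 : T) : R) = (1 : R) := rfl
    rw [h4] at h2
    rw [h3] at h2
    exact h2
  -- the key formula : t * Φ (r /ₒ t) = r
  have hval : ∀ (r : R) (t : T), ((t : R) : S) * Φ (r /ₒ t) = (r : S) := by
    intro r t
    have : ((1 : R) /ₒ t) * (r /ₒ (1 : T)) = r /ₒ t := by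
      rw [OreLocalization.one_div_mul, one_mul]
    calc ((t : R) : S) * Φ (r /ₒ t)
        = ((t : R) : S) * (Φ ((1 : R) /ₒ t) * Φ (r /ₒ (1 : T))) := by rw [← map_mul, this]
      _ = (((t : R) : S) * Φ ((1 : R) /ₒ t)) * Φ (r /ₒ (1 : T)) := by rw [mul_assoc]
      _ = (r : S) := by rw [hinv t, one_mul, hΦ']
  constructor
  · -- injectivity
    have hker : ∀ z, Φ z = 0 → z = 0 := by
      intro z hz
      induction z using OreLocalization.ind with
      | c r t =>
        have h := hval r t
        rw [hz, mul_zero] at h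
        have hr : r = 0 := Subtype.ext h.symm
        rw [hr, OreLocalization.zero_oreDiv']
    intro x y hxy
    have h0 : Φ (x - y) = 0 := by rw [map_sub, hxy, sub_self]
    exact sub_eq_zero.mp (hker _ h0)
  · -- range
    apply le_antisymm
    · -- range ⊆ division closure
      rintro _ ⟨z, rfl⟩
      rw [SetLike.mem_coe, divisionClosure, Subring.mem_sInf]
      rintro T' ⟨hRT', hdc⟩
      induction z using OreLocalization.ind with
      | c r t =>
        obtain ⟨u, hu⟩ := (hT t).mp t.2
        have hinvmem : ((u⁻¹ : Sˣ) : S) ∈ T' := hdc u (by rw [hu]; exact hRT' (t : R).2)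
        have hform : Φ (r /ₒ t) = ((u⁻¹ : Sˣ) : S) * (r : S) :=
          aux_unit_cancel u (by rw [hu]; exact hval r t)
        rw [hform]
        exact T'.mul_mem hinvmem (hRT' r.2)
    · -- division closure ⊆ range
      have : divisionClosure R ≤ Φ.range := by
        apply sInf_le
        constructor
        · intro x hx
          exact ⟨OreLocalization.numeratorHom ⟨x, hx⟩, hΦ ⟨x, hx⟩⟩
        · intro u hu
          obtain ⟨z, hz⟩ := hu
          induction z using OreLocalization.ind with
          | c r t =>
            have hr : (r : S) = ((t : R) : S) * (u : S) := by rw [← hz, hval]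
            obtain ⟨v, hv⟩ := (hT t).mp t.2
            have hru : IsUnit (r : S) := by rw [hr, ← hv]; exact (v * u).isUnit
            have hrT : r ∈ T := (hT r).mpr hru
            refine ⟨(t : R) /ₒ (⟨r, hrT⟩ : T), ?_⟩
            obtain ⟨w, hw⟩ := hru
            have key : (w : S) * Φ ((t : R) /ₒ (⟨r, hrT⟩ : T)) = ((t : R) : S) := by
              rw [hw]; exact hval (t : R) (⟨r, hrT⟩ : T)
            have hform := aux_unit_cancel w key
            rw [hform]
            have hwvu : w = v * u := by
              apply Units.ext
              rw [hw, Units.val_mul, hv]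
              exact hr
            rw [hwvu, mul_inv_rev, Units.val_mul]
            calc ((u⁻¹ : Sˣ) : S) * ((v⁻¹ : Sˣ) : S) * ((t : R) : S)
                = ((u⁻¹ : Sˣ) : S) * (((v⁻¹ : Sˣ) : S) * ((v : Sˣ) : S)) := by
                  rw [hv, mul_assoc]
              _ = ((u⁻¹ : Sˣ) : S) := by rw [v.inv_mul, mul_one]
      exact this
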